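/- (Anisotropic Poincaré–Wirtinger inequality) Let Φ : ℝ^d → [0,∞) be an N_∞ function and u ∈ W^1L^Φ([0,T],ℝ^d). Writing ũ(t) = u(t) − (1/T)∫_0^T u(s) ds, one has for every t ∈ [0,T]: Φ(ũ(t)) ≤ (1/T) ∫_0^T Φ(T u'(r)) dr. -/

import Mathlib

open MeasureTheory Filter Set
open scoped ENNReal RealInnerProductSpace Topology

noncomputable section

/-- `ℝ^d` with the euclidean norm. -/
abbrev Ed (d : ℕ) : Type := EuclideanSpace ℝ (Fin d)

/-- `Φ` is an `N_∞` function: differentiable, convex, nonnegative, vanishing exactly at `0`,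
even, and superlinear at infinity. -/
def IsNInf {m : ℕ} (Φ : Ed m → ℝ) : Prop :=
  Differentiable ℝ Φ ∧ ConvexOn ℝ Set.univ Φ ∧ (∀ y, 0 ≤ Φ y) ∧ Φ 0 = 0 ∧
    (∀ y, y ≠ 0 → 0 < Φ y) ∧ (∀ y, Φ (-y) = Φ y) ∧
    Tendsto (fun y => Φ y / ‖y‖) (comap (fun y : Ed m => ‖y‖) atTop) atTop

variable {d : ℕ}

/-- The modular `ρ_Φ(u) = ∫_0^T Φ(u(t)) dt`, as an extended nonnegative real. -/
def rhoE (T : ℝ) (Φ : Ed d → ℝ) (u : ℝ → Ed d) : ℝ≥0∞ :=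
  ∫⁻ t in Icc (0:ℝ) T, ENNReal.ofReal (Φ (u t))

/-- `u ∈ L^Φ([0,T], ℝ^d)`. -/
def MemLphi (T : ℝ) (Φ : Ed d → ℝ) (u : ℝ → Ed d) : Prop :=
  AEMeasurable u (volume.restrict (Icc (0:ℝ) T)) ∧
    ∃ l : ℝ, 0 < l ∧ rhoE T Φ (fun t => l • u t) < ⊤

/-- The Luxemburg norm of `u` on `[0,T]`. -/
def luxNorm (T : ℝ) (Φ : Ed d → ℝ) (u : ℝ → Ed d) : ℝ :=
  sInf {l : ℝ | 0 < l ∧ rhoE T Φ (fun t => l⁻¹ • u t) ≤ 1}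

/-- `u ∈ W^1L^Φ([0,T], ℝ^d)` with a.e. derivative `u'` : `u` is absolutely continuous,
being the integral of the (integrable) function `u'`, and `u' ∈ L^Φ`. -/
def MemW1Lphi (T : ℝ) (Φ : Ed d → ℝ) (u u' : ℝ → Ed d) : Prop :=
  IntegrableOn u' (Icc (0:ℝ) T) ∧ MemLphi T Φ u' ∧
    ∀ t ∈ Icc (0:ℝ) T, u t = u 0 + ∫ s in (0:ℝ)..t, u' s

theorem statement5_aux {d : ℕ} (T : ℝ) (hT : 0 < T) (Φ : Ed d → ℝ)
    (hΦdiff : Differentiable ℝ Φ) (hΦconv : ConvexOn ℝ Set.univ Φ)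
    (hΦnn : ∀ y, 0 ≤ Φ y) (hΦ0 : Φ 0 = 0) (hΦeven : ∀ y, Φ (-y) = Φ y)
    (u u' : ℝ → Ed d)
    (hu'int : IntegrableOn u' (Icc (0:ℝ) T))
    (hu'meas : AEMeasurable u' (volume.restrict (Icc (0:ℝ) T)))
    (hformula : ∀ t ∈ Icc (0:ℝ) T, u t = u 0 + ∫ s in (0:ℝ)..t, u' s)
    (t : ℝ) (ht : t ∈ Icc (0:ℝ) T)
    (hfin : (∫⁻ r in Icc (0:ℝ) T, ENNReal.ofReal (Φ (T • u' r))) ≠ ⊤) :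
    Φ (u t - T⁻¹ • ∫ s in Icc (0:ℝ) T, u s) ≤
      T⁻¹ * ∫ r in Icc (0:ℝ) T, Φ (T • u' r) := by
  set μ := volume.restrict (Icc (0:ℝ) T) with hμ
  have hμuniv : μ Set.univ = ENNReal.ofReal T := by
    simp [hμ, Real.volume_Icc]
  haveI : IsFiniteMeasure μ := ⟨by rw [hμuniv]; exact ENNReal.ofReal_lt_top⟩
  haveI : NeZero μ := ⟨by
    intro h
    rw [h] at hμuniv
    simp [ENNReal.ofReal_eq_zero] at hμuniv
    linarith⟩
  have hμtoReal : μ.real Set.univ = T := by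
    rw [measureReal_def, hμuniv, ENNReal.toReal_ofReal hT.le]
  have hΦcont : Continuous Φ := hΦdiff.continuous
  set H : ℝ → ℝ := fun r => Φ (T • u' r) with hH
  have hHnn : ∀ r, 0 ≤ H r := fun r => hΦnn _
  have hHmeas : AEStronglyMeasurable H μ :=
    (hΦcont.measurable.comp_aemeasurable (hu'meas.const_smul T)).aestronglyMeasurable
  have hHint : Integrable H μ := by
    refine ⟨hHmeas, ?_⟩
    rw [hasFiniteIntegral_iff_ofReal (Eventually.of_forall hHnn)]
    exact lt_top_iff_ne_top.2 hfin
  set C : ℝ := ∫ r, H r ∂μ with hC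
  -- key step
  have key : ∀ s ∈ Icc (0:ℝ) T, Φ (u t - u s) ≤ T⁻¹ * C := by
    have claim : ∀ a b : ℝ, a ∈ Icc (0:ℝ) T → b ∈ Icc (0:ℝ) T → a ≤ b →
        Φ (u b - u a) ≤ T⁻¹ * C := by
      intro a b ha hb hab
      have hdiff : u b - u a = ∫ r in Set.Ioc a b, u' r := by
        rw [hformula b hb, hformula a ha]
        rw [← intervalIntegral.integral_of_le hab]
        rw [← intervalIntegral.integral_add_adjacent_intervals
          (by
            apply (intervalIntegrable_iff_integrableOn_Ioc_of_le ha.1).2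
            exact hu'int.mono (Set.Ioc_subset_Icc_self.trans (Set.Icc_subset_Icc le_rfl ha.2)) le_rfl)
          (by
            apply (intervalIntegrable_iff_integrableOn_Ioc_of_le hab).2
            exact hu'int.mono ((Set.Ioc_subset_Icc_self).trans (Set.Icc_subset_Icc ha.1 hb.2)) le_rfl)]
        abel
      set f : ℝ → Ed d := (Set.Ioc a b).indicator (fun r => T • u' r) with hf
      have hfint : Integrable f μ :=
        ((hu'int.smul T).indicator measurableSet_Ioc)
      have hgf : (Φ ∘ f) = (Set.Ioc a b).indicator H := by
        funext r
        by_cases hr : r ∈ Set.Ioc a b <;>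
          simp [hf, hH, Set.indicator_of_mem, Set.indicator_of_notMem, hr, Function.comp, hΦ0]
      have hgfint : Integrable (Φ ∘ f) μ := by
        rw [hgf]; exact hHint.indicator measurableSet_Ioc
      have havg : (⨍ r, f r ∂μ) = u b - u a := by
        rw [average_eq, hμtoReal]
        have : (∫ r, f r ∂μ) = ∫ r in Set.Ioc a b, T • u' r := by
          rw [hμ, integral_indicator measurableSet_Ioc, Measure.restrict_restrict measurableSet_Ioc]
          congr 1
          rw [Set.inter_eq_left.2 (Set.Ioc_subset_Icc_self.trans (Set.Icc_subset_Icc ha.1 hb.2))]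
        rw [this, integral_smul, hdiff, smul_smul, inv_mul_cancel₀ hT.ne', one_smul]
      have jensen := hΦconv.map_average_le hΦcont.continuousOn isClosed_univ
        (Eventually.of_forall (fun x => Set.mem_univ (f x))) hfint hgfint
      rw [havg] at jensen
      refine jensen.trans ?_
      have : (⨍ r, Φ (f r) ∂μ) = T⁻¹ * ∫ r, (Set.Ioc a b).indicator H r ∂μ := by
        rw [average_eq, hμtoReal, smul_eq_mul]
        congr 1
        exact integral_congr_ae (Eventually.of_forall fun r => congrFun hgf r)
      calc (⨍ r, Φ (f r) ∂μ) = T⁻¹ * ∫ r, (Set.Ioc a b).indicator H r ∂μ := this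
        _ ≤ T⁻¹ * C := by
            apply mul_le_mul_of_nonneg_left _ (inv_nonneg.2 hT.le)
            apply integral_mono (hHint.indicator measurableSet_Ioc) hHint
            intro r
            exact Set.indicator_le_self' (fun x _ => hHnn x) r |>.trans (le_refl _) |>.trans (le_refl _)
    intro s hs
    rcases le_total s t with h | h
    · exact claim s t hs ht h
    · have : Φ (u t - u s) = Φ (u s - u t) := by
        rw [← hΦeven (u s - u t)]; congr 1; abel
      rw [this]; exact claim t s ht hs h
  -- u is integrable on [0,T]
  have huμint : Integrable u μ := by
    have hgc : ContinuousOn (fun s => u 0 + ∫ r in Set.Ioc (0:ℝ) s, u' r) (Icc (0:ℝ) T) :=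
      continuousOn_const.add (intervalIntegral.continuousOn_primitive hu'int)
    have hgint : IntegrableOn (fun s => u 0 + ∫ r in Set.Ioc (0:ℝ) s, u' r) (Icc (0:ℝ) T) :=
      hgc.integrableOn_compact isCompact_Icc
    rw [hμ]
    refine hgint.congr_fun ?_ measurableSet_Icc
    intro s hs
    rw [hformula s hs, intervalIntegral.integral_of_le hs.1]
  set F : ℝ → Ed d := fun s => u t - u s with hF
  have hFint : Integrable F μ := (integrable_const (u t)).sub huμint
  have hCnn : 0 ≤ T⁻¹ * C := by
    have := key t ht
    have h0 : 0 ≤ Φ (u t - u t) := hΦnn _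
    linarith
  have hΦFmeas : AEStronglyMeasurable (fun s => Φ (F s)) μ :=
    hΦcont.comp_aestronglyMeasurable hFint.1
  have hbound : ∀ᵐ s ∂μ, ‖Φ (F s)‖ ≤ T⁻¹ * C := by
    rw [hμ]
    filter_upwards [ae_restrict_mem measurableSet_Icc] with s hs
    rw [Real.norm_eq_abs, abs_of_nonneg (hΦnn _)]
    exact key s hs
  have hΦFint : Integrable (fun s => Φ (F s)) μ :=
    Integrable.mono' (integrable_const _) hΦFmeas hbound
  have jensen := hΦconv.map_average_le hΦcont.continuousOn isClosed_univ
    (Eventually.of_forall (fun x => Set.mem_univ (F x))) hFint hΦFint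
  have havgF : (⨍ s, F s ∂μ) = u t - T⁻¹ • ∫ s, u s ∂μ := by
    rw [average_eq, hμtoReal, integral_sub (integrable_const _) huμint, integral_const,
      hμtoReal, smul_sub, smul_smul, inv_mul_cancel₀ hT.ne', one_smul]
  have havgΦ : (⨍ s, Φ (F s) ∂μ) ≤ T⁻¹ * C := by
    rw [average_eq, hμtoReal, smul_eq_mul]
    have hint_le : (∫ s, Φ (F s) ∂μ) ≤ ∫ _s, T⁻¹ * C ∂μ := by
      refine integral_mono_ae hΦFint (integrable_const _) ?_
      rw [hμ]
      filter_upwards [ae_restrict_mem measurableSet_Icc] with s hs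
      exact key s hs
    rw [integral_const, hμtoReal, smul_eq_mul] at hint_le
    calc T⁻¹ * ∫ s, Φ (F s) ∂μ ≤ T⁻¹ * (T * (T⁻¹ * C)) :=
          mul_le_mul_of_nonneg_left hint_le (inv_nonneg.2 hT.le)
      _ = T⁻¹ * C := by field_simp
  rw [havgF] at jensen
  have : (∫ s, u s ∂μ) = ∫ s in Icc (0:ℝ) T, u s := rfl
  rw [this] at jensen
  exact jensen.trans havgΦ


/-- **Anisotropic Poincaré–Wirtinger inequality.** For `u ∈ W^1L^Φ` and
every `t ∈ [0,T]`: `Φ(ũ(t)) ≤ (1/T) ∫_0^T Φ(T u'(r)) dr` (the right-hand side being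
an extended nonnegative real). -/
theorem statement5 {d : ℕ} (T : ℝ) (hT : 0 < T) (Φ : Ed d → ℝ) (hΦ : IsNInf Φ)
    (u u' : ℝ → Ed d) (hu : MemW1Lphi T Φ u u') (t : ℝ) (ht : t ∈ Icc (0:ℝ) T) :
    ENNReal.ofReal (Φ (u t - T⁻¹ • ∫ s in Icc (0:ℝ) T, u s)) ≤
      ENNReal.ofReal T⁻¹ * rhoE T Φ (fun r => T • u' r) := by
  obtain ⟨hΦdiff, hΦconv, hΦnn, hΦ0, hΦpos, hΦeven, -⟩ := hΦ
  obtain ⟨hu'int, ⟨hu'meas, -⟩, hformula⟩ := hu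
  by_cases hfin : rhoE T Φ (fun r => T • u' r) = ⊤
  · rw [hfin, ENNReal.mul_top (by
      simp only [ne_eq, ENNReal.ofReal_eq_zero, not_le]
      positivity)]
    exact le_top
  · have hfin' : (∫⁻ r in Icc (0:ℝ) T, ENNReal.ofReal (Φ (T • u' r))) ≠ ⊤ := hfin
    have main := statement5_aux T hT Φ hΦdiff hΦconv hΦnn hΦ0 hΦeven u u' hu'int hu'meas
      hformula t ht hfin'
    have hHmeas : AEStronglyMeasurable (fun r => Φ (T • u' r))
        (volume.restrict (Icc (0:ℝ) T)) :=
      (hΦdiff.continuous.measurable.comp_aemeasurable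
        (hu'meas.const_smul T)).aestronglyMeasurable
    have hHint : Integrable (fun r => Φ (T • u' r)) (volume.restrict (Icc (0:ℝ) T)) := by
      refine ⟨hHmeas, ?_⟩
      rw [hasFiniteIntegral_iff_ofReal (Eventually.of_forall fun r => hΦnn _)]
      exact lt_top_iff_ne_top.2 hfin'
    calc ENNReal.ofReal (Φ (u t - T⁻¹ • ∫ s in Icc (0:ℝ) T, u s))
        ≤ ENNReal.ofReal (T⁻¹ * ∫ r in Icc (0:ℝ) T, Φ (T • u' r)) :=
          ENNReal.ofReal_le_ofReal main
      _ = ENNReal.ofReal T⁻¹ * ENNReal.ofReal (∫ r in Icc (0:ℝ) T, Φ (T • u' r)) :=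
          ENNReal.ofReal_mul (inv_nonneg.2 hT.le)
      _ = ENNReal.ofReal T⁻¹ * rhoE T Φ (fun r => T • u' r) := by
          rw [ofReal_integral_eq_lintegral_ofReal hHint
            (Eventually.of_forall fun r => hΦnn _)]
          rfl
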